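/- Let Ω₁ = ω × ℝ ⊂ ℝ³ with ω a bounded open set in ℝ², let ρ, s > 0, θ ∈ S¹, and let v ∈ C²_c(ℝ³) with support contained in the closure of Ω₁. Set P₂v := ∂²_{x₃} v and P₃v := 2(ρ - s(x'·θ)) θ·∇' v - 2s v, where ∇' = (∂_{x₁}, ∂_{x₂}) and θ·∇' = θ₁∂_{x₁} + θ₂∂_{x₂}. Then Re ∫_{Ω₁} (P₂v) (conj(P₃v)) dx = s ∫_{Ω₁} |∂_{x₃} v|² dx. -/

import Mathlib

open MeasureTheory Complex

noncomputable section

local notation "E" => (ℝ × ℝ) × ℝ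

/-- the vertical direction `e₃` -/
def e3 : (ℝ × ℝ) × ℝ := ((0, 0), 1)

/-- for `v ∈ C²_c(ℝ³) ∩ H¹₀(Ω₁)` with `Ω₁ = ω × ℝ`,
`Re ∫_{Ω₁} (∂²_{x₃} v) conj(2(ρ - s x'·θ) θ·∇'v - 2sv) dx = s ∫_{Ω₁} |∂_{x₃} v|² dx`. -/
theorem re_integral_P2_P3
    (ω : Set (ℝ × ℝ)) (hω : IsOpen ω) (hωb : Bornology.IsBounded ω)
    (θ : ℝ × ℝ) (hθ : θ.1 ^ 2 + θ.2 ^ 2 = 1)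
    (ρ s : ℝ) (hρ : 0 < ρ) (hs : 0 < s)
    (v : E → ℂ)
    (hv : ContDiff ℝ 2 v) (hvsupp : HasCompactSupport v)
    (hvΩ : Function.support v ⊆ closure (ω ×ˢ (Set.univ : Set ℝ)))
    (hv0 : ∀ x ∈ frontier (ω ×ˢ (Set.univ : Set ℝ)), v x = 0) :
    (∫ x in ω ×ˢ (Set.univ : Set ℝ),
        (fderiv ℝ (fun y => fderiv ℝ v y e3) x e3) *
          (starRingEnd ℂ)
            (2 * ((ρ - s * (x.1.1 * θ.1 + x.1.2 * θ.2) : ℝ) : ℂ) *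
                fderiv ℝ v x ((θ.1, θ.2), 0) -
              2 * (s : ℂ) * v x)).re =
      s * ∫ x in ω ×ˢ (Set.univ : Set ℝ), ‖fderiv ℝ v x e3‖ ^ 2 := by
  have hΩo : IsOpen (ω ×ˢ (Set.univ : Set ℝ)) := hω.prod isOpen_univ
  set u : E := ((θ.1, θ.2), 0) with hu_def
  set f : E → ℂ := fun y => fderiv ℝ v y e3 with hf_def
  set g : E → ℂ := fun y => fderiv ℝ v y u with hg_def
  set a : E → ℝ := fun y : E => ρ - s * (y.1.1 * θ.1 + y.1.2 * θ.2) with ha_def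
  set C : E → ℂ := fun x => (starRingEnd ℂ)
      (2 * ((a x : ℝ) : ℂ) * g x - 2 * (s : ℂ) * v x) with hC_def
  -- basic smoothness
  have hv1 : Differentiable ℝ v := hv.differentiable two_ne_zero
  have hDv : ContDiff ℝ 1 (fderiv ℝ v) := hv.fderiv_right (le_refl 2)
  have hfc : ContDiff ℝ 1 f := hDv.clm_apply contDiff_const
  have hgc : ContDiff ℝ 1 g := hDv.clm_apply contDiff_const
  have hf1 : Differentiable ℝ f := hfc.differentiable one_ne_zero
  have hg1 : Differentiable ℝ g := hgc.differentiable one_ne_zero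
  have hac : ContDiff ℝ 2 a := by
    apply ContDiff.sub contDiff_const
    exact contDiff_const.mul (((contDiff_fst.fst).mul contDiff_const).add
      ((contDiff_fst.snd).mul contDiff_const))
  have ha1 : Differentiable ℝ a := hac.differentiable two_ne_zero
  have haC : Continuous fun x : E => ((a x : ℝ) : ℂ) :=
    Complex.continuous_ofReal.comp (hac.continuous)
  -- compact supports
  have hsf : HasCompactSupport f :=
    (hvsupp.fderiv ℝ).comp_left (g := fun L : E →L[ℝ] ℂ => L e3) rfl
  have hsg : HasCompactSupport g :=
    (hvsupp.fderiv ℝ).comp_left (g := fun L : E →L[ℝ] ℂ => L u) rfl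
  have hsC : HasCompactSupport C := by
    apply HasCompactSupport.intro (K := tsupport g ∪ tsupport v) (hsg.union hvsupp)
    intro x hx
    rw [Set.mem_union] at hx
    push_neg at hx
    have h1 : g x = 0 := image_eq_zero_of_notMem_tsupport hx.1
    have h2 : v x = 0 := image_eq_zero_of_notMem_tsupport hx.2
    simp [hC_def, h1, h2]
  -- vanishing of v off Ω
  have hmem : ∀ x : E, x ∈ ω ×ˢ (Set.univ : Set ℝ) ↔ x.1 ∈ ω := by
    intro x; simp [Set.mem_prod]
  have hv_zero : ∀ x : E, x.1 ∉ ω → v x = 0 := by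
    intro x hx
    by_cases hxc : x ∈ closure (ω ×ˢ (Set.univ : Set ℝ))
    · exact hv0 x (by rw [hΩo.frontier_eq]; exact ⟨hxc, fun h => hx ((hmem x).1 h)⟩)
    · by_contra h
      exact hxc (hvΩ h)
  -- directional vanishing along vertical lines
  have key : ∀ (h : E → ℂ), Differentiable ℝ h →
      (∀ p : ℝ × ℝ, p ∉ ω → ∀ t : ℝ, h (p, t) = 0) →
      ∀ x : E, x.1 ∉ ω → fderiv ℝ h x e3 = 0 := by
    intro h hdiff hz x hx
    have hc : HasDerivAt (fun t => h (x.1, t)) (fderiv ℝ h x e3) x.2 := by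
      have hcurve : HasDerivAt (fun t : ℝ => ((x.1 : ℝ × ℝ), t)) ((0 : ℝ × ℝ), (1:ℝ)) x.2 :=
        (hasDerivAt_const x.2 x.1).prodMk (hasDerivAt_id x.2)
      have := (hdiff (x.1, x.2)).hasFDerivAt.comp_hasDerivAt x.2 hcurve
      simpa [e3, Prod.mk.eta, Function.comp_def, Prod.mk_zero_zero] using this
    have heq : (fun t => h (x.1, t)) = fun _ => (0:ℂ) := funext (hz x.1 hx)
    rw [heq] at hc
    exact hc.unique (hasDerivAt_const _ 0)
  have hf_zero : ∀ x : E, x.1 ∉ ω → f x = 0 := fun x hx =>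
    key v hv1 (fun p hp t => hv_zero (p, t) hp) x hx
  have hDf_zero : ∀ x : E, x.1 ∉ ω → fderiv ℝ f x e3 = 0 := fun x hx =>
    key f hf1 (fun p hp t => hf_zero (p, t) hp) x hx
  -- extend both set integrals to the whole space
  rw [setIntegral_eq_integral_of_forall_compl_eq_zero
      (f := fun x => (fderiv ℝ (fun y => fderiv ℝ v y e3) x e3) *
        (starRingEnd ℂ) (2 * ((ρ - s * (x.1.1 * θ.1 + x.1.2 * θ.2) : ℝ) : ℂ) *
          fderiv ℝ v x ((θ.1, θ.2), 0) - 2 * (s : ℂ) * v x))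
      (by
        intro x hx
        have hx1 : x.1 ∉ ω := fun h => hx ((hmem x).2 h)
        have h0 : fderiv ℝ f x e3 = 0 := hDf_zero x hx1
        simp only [hf_def] at h0
        simp [h0]),
    setIntegral_eq_integral_of_forall_compl_eq_zero
      (f := fun x => ‖fderiv ℝ v x e3‖ ^ 2)
      (by
        intro x hx
        have hx1 : x.1 ∉ ω := fun h => hx ((hmem x).2 h)
        have h0 : f x = 0 := hf_zero x hx1
        simp only [hf_def] at h0
        simp [h0])]
  -- fold into the set names
  show (∫ x, fderiv ℝ f x e3 * C x).re = s * ∫ x, ‖f x‖ ^ 2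
  -- derivative of a in the two relevant directions
  have haD : ∀ x : E, HasFDerivAt a ((0 : E →L[ℝ] ℝ) - s •
      (θ.1 • ((ContinuousLinearMap.fst ℝ ℝ ℝ).comp
          (ContinuousLinearMap.fst ℝ (ℝ × ℝ) ℝ)) +
        θ.2 • ((ContinuousLinearMap.snd ℝ ℝ ℝ).comp
          (ContinuousLinearMap.fst ℝ (ℝ × ℝ) ℝ)))) x := by
    intro x
    have hc1 := ((ContinuousLinearMap.fst ℝ ℝ ℝ).comp
        (ContinuousLinearMap.fst ℝ (ℝ × ℝ) ℝ)).hasFDerivAt (x := x)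
    have hc2 := ((ContinuousLinearMap.snd ℝ ℝ ℝ).comp
        (ContinuousLinearMap.fst ℝ (ℝ × ℝ) ℝ)).hasFDerivAt (x := x)
    have h1 := (hc1.mul_const θ.1).add (hc2.mul_const θ.2)
    exact (hasFDerivAt_const ρ x).sub (h1.const_mul s)
  have ha_e3 : ∀ x : E, fderiv ℝ a x e3 = 0 := by
    intro x
    rw [(haD x).fderiv]
    simp [e3]
  have hθ' : θ.1 * θ.1 + θ.2 * θ.2 = 1 := by nlinarith [hθ]
  have ha_u : ∀ x : E, fderiv ℝ a x u = -s := by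
    intro x
    rw [(haD x).fderiv]
    simp [hu_def]
    nlinarith [hθ]
  -- Clairaut
  have clair : ∀ x : E, fderiv ℝ g x e3 = fderiv ℝ f x u := by
    intro x
    have hsymm := (hv.contDiffAt (x := x)).isSymmSndFDerivAt (by simp [minSmoothness_of_isRCLikeNormedField])
    have h1 : fderiv ℝ g x = (fderiv ℝ (fderiv ℝ v) x).flip u := by
      rw [hg_def]
      rw [fderiv_clm_apply (hDv.differentiable one_ne_zero x) (differentiableAt_const u)]
      simp
    have h2 : fderiv ℝ f x = (fderiv ℝ (fderiv ℝ v) x).flip e3 := by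
      rw [hf_def]
      rw [fderiv_clm_apply (hDv.differentiable one_ne_zero x) (differentiableAt_const e3)]
      simp
    rw [h1, h2]
    exact hsymm e3 u
  -- derivative of C in direction e3
  have hCdiff : Differentiable ℝ C := by
    apply Complex.conjCLE.differentiable.comp
    exact (((Complex.ofRealCLM.differentiable.comp ha1).const_mul 2).mul hg1).sub
      (hv1.const_mul _)
  have hfderivC : ∀ x : E, fderiv ℝ C x e3 =
      (starRingEnd ℂ) (2 * ((a x : ℝ) : ℂ) * fderiv ℝ g x e3 - 2 * (s:ℂ) * f x) := by
    intro x
    have hWx : HasFDerivAt (fun y : E => ((a y : ℝ) : ℂ))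
        (Complex.ofRealCLM.comp (fderiv ℝ a x)) x :=
      Complex.ofRealCLM.hasFDerivAt.comp x (ha1 x).hasFDerivAt
    have hcx := hWx.const_mul (2 : ℂ)
    have hgx : HasFDerivAt g (fderiv ℝ g x) x := (hg1 x).hasFDerivAt
    have hprod := hcx.mul hgx
    have hvx := (hv1 x).hasFDerivAt.const_mul (2 * (s:ℂ))
    have hinner := hprod.sub hvx
    have hCx := Complex.conjCLE.toContinuousLinearMap.hasFDerivAt.comp x hinner
    have hCx' : HasFDerivAt C _ x := hCx
    rw [hCx'.fderiv]
    simp only [ContinuousLinearMap.coe_comp', Function.comp_apply,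
      ContinuousLinearMap.add_apply, ContinuousLinearMap.sub_apply,
      ContinuousLinearMap.smul_apply, smul_eq_mul]
    have hza : (fderiv ℝ a x) e3 = 0 := ha_e3 x
    simp [hza, hf_def]
  haveI hHaar2 : (volume : Measure (ℝ × ℝ)).IsAddHaarMeasure := by
    rw [Measure.volume_eq_prod]; infer_instance
  haveI hHaar3 : (volume : Measure E).IsAddHaarMeasure := by
    rw [Measure.volume_eq_prod]; infer_instance
  -- continuity facts
  have hcf : Continuous f := hfc.continuous
  have hcg : Continuous g := hgc.continuous
  have hcv : Continuous v := hv.continuous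
  have hcC : Continuous C := by
    have hin : Continuous fun x : E => 2 * ((a x : ℝ) : ℂ) * g x - 2 * (s:ℂ) * v x :=
      ((continuous_const.mul haC).mul hcg).sub (continuous_const.mul hcv)
    exact continuous_star.comp hin
  have hcDf3 : Continuous fun x : E => fderiv ℝ f x e3 :=
    ((hfc.fderiv_right (m := 0) le_rfl).clm_apply contDiff_const).continuous
  have hcDg3 : Continuous fun x : E => fderiv ℝ g x e3 :=
    ((hgc.fderiv_right (m := 0) le_rfl).clm_apply contDiff_const).continuous
  have hcDfu : Continuous fun x : E => fderiv ℝ f x u :=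
    ((hfc.fderiv_right (m := 0) le_rfl).clm_apply contDiff_const).continuous
  -- the real-valued function N = |∂₃ v|²
  set N : E → ℝ := fun y => (f y).re * (f y).re + (f y).im * (f y).im with hN_def
  have hsN : HasCompactSupport N :=
    hsf.comp_left (g := fun z : ℂ => z.re * z.re + z.im * z.im) (by simp)
  have hcN : Continuous N :=
    ((Complex.continuous_re.comp hcf).mul (Complex.continuous_re.comp hcf)).add
      ((Complex.continuous_im.comp hcf).mul (Complex.continuous_im.comp hcf))
  have hNint_eq : (∫ x : E, ‖f x‖ ^ 2) = ∫ x : E, N x := by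
    congr 1
    funext x
    simp [hN_def, Complex.sq_norm, Complex.normSq_apply]
  have hNdiff : Differentiable ℝ N := by
    intro x
    have hfx := (hf1 x).hasFDerivAt
    have hre := Complex.reCLM.hasFDerivAt.comp x hfx
    have him := Complex.imCLM.hasFDerivAt.comp x hfx
    exact ((hre.mul hre).add (him.mul him)).differentiableAt
  have hNval : ∀ (x : E) (w : E), fderiv ℝ N x w =
      2 * (f x).re * (fderiv ℝ f x w).re + 2 * (f x).im * (fderiv ℝ f x w).im := by
    intro x w
    have hfx := (hf1 x).hasFDerivAt
    have hre := Complex.reCLM.hasFDerivAt.comp x hfx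
    have him := Complex.imCLM.hasFDerivAt.comp x hfx
    have hNd : HasFDerivAt N _ x := (hre.mul hre).add (him.mul him)
    rw [hNd.fderiv]
    simp only [ContinuousLinearMap.add_apply, ContinuousLinearMap.smul_apply,
      ContinuousLinearMap.coe_comp', Function.comp_apply, smul_eq_mul,
      Complex.reCLM_apply, Complex.imCLM_apply]
    ring
  -- second integration by parts (over the horizontal direction u)
  have ibp2 : (∫ x : E, a x * fderiv ℝ N x u) = s * ∫ x : E, N x := by
    have heq1 : (fun x : E => fderiv ℝ a x u * N x) = fun x : E => (-s) * N x := by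
      funext x; rw [ha_u x]
    have h1 : Integrable (fun x : E => fderiv ℝ a x u * N x) := by
      rw [heq1]
      exact (continuous_const.mul hcN).integrable_of_hasCompactSupport hsN.mul_left
    have heq2 : (fun x : E => a x * fderiv ℝ N x u) = fun x : E =>
        a x * (2 * (f x).re * (fderiv ℝ f x u).re + 2 * (f x).im * (fderiv ℝ f x u).im) := by
      funext x; rw [hNval x u]
    have h2 : Integrable (fun x : E => a x * fderiv ℝ N x u) := by
      rw [heq2]
      apply Continuous.integrable_of_hasCompactSupport
      · exact hac.continuous.mul
          (((continuous_const.mul (Complex.continuous_re.comp hcf)).mul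
              (Complex.continuous_re.comp hcDfu)).add
            ((continuous_const.mul (Complex.continuous_im.comp hcf)).mul
              (Complex.continuous_im.comp hcDfu)))
      · apply HasCompactSupport.mono' hsf
        intro x hx
        by_contra h
        have hz : f x = 0 := image_eq_zero_of_notMem_tsupport h
        apply hx
        simp [hz]
    have h3 : Integrable (fun x : E => a x * N x) :=
      (hac.continuous.mul hcN).integrable_of_hasCompactSupport hsN.mul_left
    have key2 := integral_mul_fderiv_eq_neg_fderiv_mul_of_integrable
      (v := u) h1 h2 h3 (fun x _ => ha1 x) (fun x _ => hNdiff x)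
    rw [key2, heq1, integral_const_mul]
    ring
  -- first integration by parts (over the vertical direction e3)
  have i2 : Integrable (fun x : E => C x * fderiv ℝ f x e3) :=
    (hcC.mul hcDf3).integrable_of_hasCompactSupport hsC.mul_right
  have i3 : Integrable (fun x : E => C x * f x) :=
    (hcC.mul hcf).integrable_of_hasCompactSupport hsC.mul_right
  have heqC : (fun x : E => fderiv ℝ C x e3 * f x) = fun x : E =>
      (starRingEnd ℂ) (2 * ((a x : ℝ) : ℂ) * fderiv ℝ g x e3) * f x -
        (starRingEnd ℂ) (2 * (s:ℂ) * f x) * f x := by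
    funext x
    rw [hfderivC x, map_sub, sub_mul]
  have iT1 : Integrable (fun x : E =>
      (starRingEnd ℂ) (2 * ((a x : ℝ) : ℂ) * fderiv ℝ g x e3) * f x) := by
    apply Continuous.integrable_of_hasCompactSupport
    · exact (continuous_star.comp ((continuous_const.mul haC).mul hcDg3)).mul hcf
    · exact hsf.mul_left
  have iT2 : Integrable (fun x : E => (starRingEnd ℂ) (2 * (s:ℂ) * f x) * f x) := by
    apply Continuous.integrable_of_hasCompactSupport
    · exact (continuous_star.comp (continuous_const.mul hcf)).mul hcf
    · exact hsf.mul_left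
  have i1 : Integrable (fun x : E => fderiv ℝ C x e3 * f x) := by
    rw [heqC]
    exact iT1.sub iT2
  have ibp1 := integral_mul_fderiv_eq_neg_fderiv_mul_of_integrable
    (v := e3) i1 i2 i3 (fun x _ => hCdiff x) (fun x _ => hf1 x)
  have hmc : (fun x : E => fderiv ℝ f x e3 * C x) = fun x : E => C x * fderiv ℝ f x e3 :=
    funext fun x => mul_comm _ _
  rw [hmc, ibp1, heqC, integral_sub iT1 iT2, Complex.neg_re, Complex.sub_re]
  -- compute the real parts of the two integrals
  have hT1 : (∫ x : E, (starRingEnd ℂ) (2 * ((a x : ℝ) : ℂ) * fderiv ℝ g x e3) * f x).re =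
      ∫ x : E, a x * fderiv ℝ N x u := by
    rw [show (∫ x : E, (starRingEnd ℂ) (2 * ((a x : ℝ) : ℂ) * fderiv ℝ g x e3) * f x).re =
        Complex.reCLM (∫ x : E, (starRingEnd ℂ) (2 * ((a x : ℝ) : ℂ) * fderiv ℝ g x e3) * f x)
        from rfl]
    rw [← Complex.reCLM.integral_comp_comm iT1]
    congr 1
    funext x
    rw [clair x, hNval x u]
    simp only [Complex.reCLM_apply, Complex.mul_re, Complex.mul_im,
      Complex.conj_re, Complex.conj_im, Complex.ofReal_re, Complex.ofReal_im,
      Complex.re_ofNat, Complex.im_ofNat]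
    ring
  have hT2 : (∫ x : E, (starRingEnd ℂ) (2 * (s:ℂ) * f x) * f x).re =
      2 * s * ∫ x : E, N x := by
    rw [show (∫ x : E, (starRingEnd ℂ) (2 * (s:ℂ) * f x) * f x).re =
        Complex.reCLM (∫ x : E, (starRingEnd ℂ) (2 * (s:ℂ) * f x) * f x) from rfl]
    rw [← Complex.reCLM.integral_comp_comm iT2]
    rw [show (fun x : E => Complex.reCLM ((starRingEnd ℂ) (2 * (s:ℂ) * f x) * f x)) =
        fun x : E => (2 * s) * N x from funext fun x => by
      simp only [Complex.reCLM_apply, Complex.mul_re, Complex.mul_im,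
        Complex.conj_re, Complex.conj_im, Complex.ofReal_re, Complex.ofReal_im,
        Complex.re_ofNat, Complex.im_ofNat, hN_def]
      ring]
    rw [integral_const_mul]
  rw [hT1, hT2, ibp2, hNint_eq]
  ring
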